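/- Let m ≥ 1, let γ ∈ (0,1), and let f : [0,1]^m → ℝ be Lebesgue integrable. Suppose that ∫_{A₁×⋯×A_m} f dλ^m = 0 for all m-tuples A₁,…,A_m of Lebesgue-measurable subsets of [0,1] with λ(A₁) = ⋯ = λ(A_m) = γ. Then f = 0 almost everywhere on [0,1]^m. Moreover, if γ < 1/m, the same conclusion holds if the hypothesis is only assumed for m-tuples of pairwise disjoint such sets. -/

import Mathlib

open MeasureTheory Set
open scoped ENNReal

lemma exists_subset_volume_eq {E : Set ℝ} (hE : MeasurableSet E) (hEb : E ⊆ Set.Icc (0:ℝ) 1)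
    {r : ℝ≥0∞} (hr : r ≤ volume E) :
    ∃ A, A ⊆ E ∧ MeasurableSet A ∧ volume A = r := by
  have hEfin : volume E < ⊤ := lt_of_le_of_lt (measure_mono hEb)
    (by simp [Real.volume_Icc])
  have hfin : ∀ t : ℝ, volume (E ∩ Set.Iic t) ≠ ⊤ :=
    fun t => ((measure_mono inter_subset_left).trans_lt hEfin).ne
  set ψ : ℝ → ℝ := fun t => (volume (E ∩ Set.Iic t)).toReal with hψdef
  have hsplit : ∀ s t : ℝ, s ≤ t →
      volume (E ∩ Set.Iic t) = volume (E ∩ Set.Iic s) + volume (E ∩ Set.Ioc s t) := by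
    intro s t hst
    rw [← measure_union ?_ (hE.inter measurableSet_Ioc)]
    · rw [← Set.inter_union_distrib_left, Set.Iic_union_Ioc_eq_Iic hst]
    · exact (Set.Iic_disjoint_Ioc le_rfl).mono inter_subset_right inter_subset_right
  have hmono : Monotone ψ := fun s t hst => by
    exact ENNReal.toReal_mono (hfin t)
      (measure_mono (Set.inter_subset_inter_right _ (Set.Iic_subset_Iic.2 hst)))
  have hlip : LipschitzWith 1 ψ := by
    apply LipschitzWith.of_dist_le_mul
    intro s t
    rcases le_total s t with h | h
    · rw [Real.dist_eq, Real.dist_eq, abs_of_nonpos (by linarith [hmono h]),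
        abs_of_nonpos (by linarith)]
      have := hsplit s t h
      have h2 : volume (E ∩ Set.Ioc s t) ≤ ENNReal.ofReal (t - s) := by
        refine (measure_mono inter_subset_right).trans ?_
        rw [Real.volume_Ioc]
      have h3 : ψ t = ψ s + (volume (E ∩ Set.Ioc s t)).toReal := by
        simp only [hψdef, this, ENNReal.toReal_add (hfin s)
          ((measure_mono inter_subset_right).trans_lt (by simp [Real.volume_Ioc] :
            volume (Set.Ioc s t) < ⊤)).ne]
      have h4 : (volume (E ∩ Set.Ioc s t)).toReal ≤ t - s := by
        refine (ENNReal.toReal_le_toReal ?_ (by simp)).2 h2 |>.trans ?_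
        · exact ((measure_mono inter_subset_right).trans_lt
            (by simp [Real.volume_Ioc] : volume (Set.Ioc s t) < ⊤)).ne
        · rw [ENNReal.toReal_ofReal_eq_iff.2 (by linarith)]
      simp only [NNReal.coe_one, one_mul]
      linarith
    · rw [Real.dist_eq, Real.dist_eq, abs_of_nonneg (by linarith [hmono h]),
        abs_of_nonneg (by linarith)]
      have := hsplit t s h
      have h2 : volume (E ∩ Set.Ioc t s) ≤ ENNReal.ofReal (s - t) := by
        refine (measure_mono inter_subset_right).trans ?_
        rw [Real.volume_Ioc]
      have h3 : ψ s = ψ t + (volume (E ∩ Set.Ioc t s)).toReal := by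
        simp only [hψdef, this, ENNReal.toReal_add (hfin t)
          ((measure_mono inter_subset_right).trans_lt (by simp [Real.volume_Ioc] :
            volume (Set.Ioc t s) < ⊤)).ne]
      have h4 : (volume (E ∩ Set.Ioc t s)).toReal ≤ s - t := by
        refine (ENNReal.toReal_le_toReal ?_ (by simp)).2 h2 |>.trans ?_
        · exact ((measure_mono inter_subset_right).trans_lt
            (by simp [Real.volume_Ioc] : volume (Set.Ioc t s) < ⊤)).ne
        · rw [ENNReal.toReal_ofReal_eq_iff.2 (by linarith)]
      simp only [NNReal.coe_one, one_mul]
      linarith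
  have hm1 : ψ (-1) = 0 := by
    have : E ∩ Set.Iic (-1) = ∅ := by
      ext x; simp only [Set.mem_inter_iff, Set.mem_Iic, Set.mem_empty_iff_false, iff_false]
      rintro ⟨hx, hx1⟩; have := (hEb hx).1; linarith
    simp [hψdef, this]
  have h1 : ψ 1 = (volume E).toReal := by
    have : E ∩ Set.Iic 1 = E := by
      apply Set.inter_eq_self_of_subset_left
      intro x hx; exact (hEb hx).2
    simp [hψdef, this]
  have hmem : r.toReal ∈ Set.Icc (ψ (-1)) (ψ 1) := by
    rw [hm1, h1]
    exact ⟨ENNReal.toReal_nonneg, ENNReal.toReal_mono hEfin.ne hr⟩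
  obtain ⟨t, -, ht⟩ := intermediate_value_Icc (by norm_num : (-1:ℝ) ≤ 1)
    hlip.continuous.continuousOn hmem
  refine ⟨E ∩ Set.Iic t, inter_subset_left, hE.inter measurableSet_Iic, ?_⟩
  have hrfin : r ≠ ⊤ := (hr.trans_lt hEfin).ne
  have ht' : (volume (E ∩ Set.Iic t)).toReal = r.toReal := ht
  rw [← ENNReal.ofReal_toReal (hfin t), ht', ENNReal.ofReal_toReal hrfin]

lemma onedim {γ : ℝ} (hγ0 : 0 < γ) {E : Set ℝ} (hEm : MeasurableSet E)
    (hEb : E ⊆ Set.Icc (0:ℝ) 1) (hEγ : ENNReal.ofReal γ < volume E)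
    {g : ℝ → ℝ} (hg : IntegrableOn g E volume)
    (h0 : ∀ A, MeasurableSet A → A ⊆ E → volume A = ENNReal.ofReal γ → ∫ x in A, g x = 0) :
    ∀ B, MeasurableSet B → B ⊆ E → ∫ x in B, g x = 0 := by
  have hEfin : volume E < ⊤ := lt_of_le_of_lt (measure_mono hEb) (by simp [Real.volume_Icc])
  have hγpos : (0:ℝ≥0∞) < ENNReal.ofReal γ := ENNReal.ofReal_pos.2 hγ0
  -- replace g by a strongly measurable representative
  obtain ⟨g', hg'sm, hgg'⟩ : ∃ g', StronglyMeasurable g' ∧ g =ᵐ[volume.restrict E] g' :=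
    ⟨hg.1.mk g, hg.1.stronglyMeasurable_mk, hg.1.ae_eq_mk⟩
  have hg'meas : Measurable g' := hg'sm.measurable
  have key : ∀ A : Set ℝ, A ⊆ E → ∫ x in A, g x = ∫ x in A, g' x := fun A hAE =>
    integral_congr_ae (ae_restrict_of_ae_restrict_of_subset hAE hgg')
  have hg' : IntegrableOn g' E volume := hg.congr hgg'
  -- swap lemma
  have swap : ∀ S T : Set ℝ, MeasurableSet S → MeasurableSet T → S ⊆ E → T ⊆ E →
      Disjoint S T → volume T = volume S → volume S ≤ ENNReal.ofReal γ →
      ENNReal.ofReal γ + volume S ≤ volume E →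
      ∫ x in S, g' x = ∫ x in T, g' x := by
    intro S T hS hT hSE hTE hdisj hvol hsγ hroom
    set s := volume S with hs
    have hUm : MeasurableSet (S ∪ T) := hS.union hT
    have hUE : S ∪ T ⊆ E := union_subset hSE hTE
    have hCex : ENNReal.ofReal γ - s ≤ volume (E \ (S ∪ T)) := by
      have h1 : volume (E \ (S ∪ T)) = volume E - volume (S ∪ T) :=
        measure_diff hUE hUm.nullMeasurableSet
          (lt_of_le_of_lt (measure_mono hUE) hEfin).ne
      have h2 : volume (S ∪ T) ≤ s + s := by
        refine (measure_union_le _ _).trans ?_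
        rw [hvol]
      rw [h1]
      have h3 : (ENNReal.ofReal γ - s) + volume (S ∪ T) ≤ volume E := by
        calc (ENNReal.ofReal γ - s) + volume (S ∪ T) ≤ (ENNReal.ofReal γ - s) + (s + s) := by
              gcongr
          _ = ((ENNReal.ofReal γ - s) + s) + s := by ring
          _ = ENNReal.ofReal γ + s := by rw [tsub_add_cancel_of_le hsγ]
          _ ≤ volume E := hroom
      exact ENNReal.le_sub_of_add_le_right
        ((measure_mono hUE).trans_lt hEfin).ne h3
    obtain ⟨C, hCsub, hCm, hCvol⟩ := exists_subset_volume_eq (hEm.diff hUm)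
      ((diff_subset).trans hEb) hCex
    have hCE : C ⊆ E := hCsub.trans diff_subset
    have hCS : Disjoint S C := by
      refine Set.disjoint_left.2 fun x hxS hxC => ?_
      exact (hCsub hxC).2 (Set.mem_union_left _ hxS)
    have hCT : Disjoint T C := by
      refine Set.disjoint_left.2 fun x hxT hxC => ?_
      exact (hCsub hxC).2 (Set.mem_union_right _ hxT)
    have hSfin : volume S ≠ ⊤ := (lt_of_le_of_lt (measure_mono hSE) hEfin).ne
    have hvolSC : volume (S ∪ C) = ENNReal.ofReal γ := by
      rw [measure_union hCS hCm, hCvol, hs, add_tsub_cancel_of_le hsγ]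
    have hvolTC : volume (T ∪ C) = ENNReal.ofReal γ := by
      rw [measure_union hCT hCm, hCvol, hvol, hs, add_tsub_cancel_of_le hsγ]
    have hintS : IntegrableOn g' S volume := hg'.mono_set hSE
    have hintT : IntegrableOn g' T volume := hg'.mono_set hTE
    have hintC : IntegrableOn g' C volume := hg'.mono_set hCE
    have e1 : ∫ x in S ∪ C, g' x = 0 := by
      rw [← key _ (union_subset hSE hCE)]
      exact h0 _ (hS.union hCm) (union_subset hSE hCE) hvolSC
    have e2 : ∫ x in T ∪ C, g' x = 0 := by
      rw [← key _ (union_subset hTE hCE)]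
      exact h0 _ (hT.union hCm) (union_subset hTE hCE) hvolTC
    rw [setIntegral_union hCS hCm hintS hintC] at e1
    rw [setIntegral_union hCT hCm hintT hintC] at e2
    linarith
  -- dichotomy
  have dich : ∀ c : ℝ, volume (E ∩ {x | g' x < c}) = 0 ∨ volume (E ∩ {x | c < g' x}) = 0 := by
    intro c
    by_contra hcon
    push_neg at hcon
    obtain ⟨h1, h2⟩ := hcon
    have hm1 : MeasurableSet (E ∩ {x | g' x < c}) :=
      hEm.inter (measurableSet_lt hg'meas measurable_const)
    have hm2 : MeasurableSet (E ∩ {x | c < g' x}) :=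
      hEm.inter (measurableSet_lt measurable_const hg'meas)
    set t : ℝ≥0∞ := min (min (volume (E ∩ {x | g' x < c})) (volume (E ∩ {x | c < g' x})))
      (min (ENNReal.ofReal γ) (volume E - ENNReal.ofReal γ)) with htdef
    have htpos : 0 < t := by
      simp only [htdef, lt_min_iff]
      exact ⟨⟨pos_iff_ne_zero.2 h1, pos_iff_ne_zero.2 h2⟩,
        ⟨hγpos, tsub_pos_of_lt hEγ⟩⟩
    have htγ : t ≤ ENNReal.ofReal γ := (min_le_right _ _).trans (min_le_left _ _)
    obtain ⟨S, hSsub, hSm, hSvol⟩ := exists_subset_volume_eq hm1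
      ((inter_subset_left).trans hEb) ((min_le_left _ _).trans (min_le_left _ _))
    obtain ⟨T, hTsub, hTm, hTvol⟩ := exists_subset_volume_eq hm2
      ((inter_subset_left).trans hEb) ((min_le_left _ _).trans (min_le_right _ _))
    have hST : Disjoint S T := by
      refine Set.disjoint_left.2 fun x hxS hxT => ?_
      have := (hSsub hxS).2
      have := (hTsub hxT).2
      simp only [Set.mem_setOf_eq] at *
      linarith
    have hSE : S ⊆ E := hSsub.trans inter_subset_left
    have hTE : T ⊆ E := hTsub.trans inter_subset_left
    have hswap := swap S T hSm hTm hSE hTE hST (hTvol.trans hSvol.symm) (hSvol ▸ htγ)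
      (by
        rw [hSvol]
        calc ENNReal.ofReal γ + t ≤ ENNReal.ofReal γ + (volume E - ENNReal.ofReal γ) := by
              gcongr
              exact (min_le_right _ _).trans (min_le_right _ _)
          _ = volume E := add_tsub_cancel_of_le hEγ.le)
    have htfin : t ≠ ⊤ := (htγ.trans_lt ENNReal.ofReal_lt_top).ne
    -- strict bounds
    have hSlt : ∫ x in S, g' x < c * t.toReal := by
      have hpos : 0 < ∫ x in S, (c - g' x) := by
        rw [setIntegral_pos_iff_support_of_nonneg_ae ?_ ?_]
        · have hsub : S ⊆ Function.support fun x => c - g' x := by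
            intro x hx
            have := (hSsub hx).2
            simp only [Set.mem_setOf_eq] at this
            simp only [Function.mem_support]
            intro h; linarith [sub_eq_zero.1 h]
          rw [Set.inter_eq_self_of_subset_right hsub, hSvol]
          exact htpos
        · refine (ae_restrict_iff' hSm).2 (ae_of_all _ fun x hx => ?_)
          have h5 := (hSsub hx).2
          simp only [Set.mem_setOf_eq] at h5
          simp only [Pi.zero_apply]
          linarith
        · exact (integrableOn_const (μ := volume) (s := S) (by rw [hSvol]; exact htfin)).sub (hg'.mono_set hSE)
      have hint : IntegrableOn g' S volume := hg'.mono_set hSE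
      rw [integral_sub (integrableOn_const (μ := volume) (s := S) (C := c) (by rw [hSvol]; exact htfin)) hint,
        setIntegral_const] at hpos
      rw [measureReal_def, hSvol] at hpos
      simp only [smul_eq_mul] at hpos
      linarith
    have hTgt : c * t.toReal < ∫ x in T, g' x := by
      have hpos : 0 < ∫ x in T, (g' x - c) := by
        rw [setIntegral_pos_iff_support_of_nonneg_ae ?_ ?_]
        · have hsub : T ⊆ Function.support fun x => g' x - c := by
            intro x hx
            have := (hTsub hx).2
            simp only [Set.mem_setOf_eq] at this
            simp only [Function.mem_support]
            intro h; linarith [sub_eq_zero.1 h]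
          rw [Set.inter_eq_self_of_subset_right hsub, hTvol]
          exact htpos
        · refine (ae_restrict_iff' hTm).2 (ae_of_all _ fun x hx => ?_)
          have h5 := (hTsub hx).2
          simp only [Set.mem_setOf_eq] at h5
          simp only [Pi.zero_apply]
          linarith
        · exact (hg'.mono_set hTE).sub (integrableOn_const (μ := volume) (s := T) (by rw [hTvol]; exact htfin))
      have hint : IntegrableOn g' T volume := hg'.mono_set hTE
      rw [integral_sub hint (integrableOn_const (μ := volume) (s := T) (C := c) (by rw [hTvol]; exact htfin)),
        setIntegral_const] at hpos
      rw [measureReal_def, hTvol] at hpos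
      simp only [smul_eq_mul] at hpos
      linarith
    linarith [hswap]
  -- E has positive measure
  have hEpos : volume E ≠ 0 := (hγpos.trans hEγ).ne'
  have hZne : ∃ c : ℝ, volume (E ∩ {x | g' x < c}) = 0 := by
    by_contra hc
    push_neg at hc
    have hall : ∀ c : ℝ, volume (E ∩ {x | c < g' x}) = 0 := fun c => (dich c).resolve_left (hc c)
    apply hEpos
    have hcover : E ⊆ ⋃ n : ℕ, E ∩ {x | (-(n:ℝ)) < g' x} := by
      intro x hx
      obtain ⟨n, hn⟩ := exists_nat_gt (-(g' x))
      exact Set.mem_iUnion.2 ⟨n, hx, by simp only [Set.mem_setOf_eq]; linarith⟩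
    exact measure_mono_null hcover (measure_iUnion_null fun n => hall _)
  have hZbdd0 : ∃ c₂ : ℝ, volume (E ∩ {x | g' x < c₂}) ≠ 0 := by
    by_contra hc; push_neg at hc
    apply hEpos
    have hcover : E ⊆ ⋃ n : ℕ, E ∩ {x | g' x < (n:ℝ)} := by
      intro x hx
      obtain ⟨n, hn⟩ := exists_nat_gt (g' x)
      exact Set.mem_iUnion.2 ⟨n, hx, hn⟩
    exact measure_mono_null hcover (measure_iUnion_null fun n => hc _)
  set Z : Set ℝ := {c | volume (E ∩ {x | g' x < c}) = 0} with hZdef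
  have hZmono : ∀ c c' : ℝ, c ≤ c' → c' ∈ Z → c ∈ Z := by
    intro c c' hcc' h
    refine measure_mono_null ?_ h
    refine Set.inter_subset_inter_right _ fun x hx => ?_
    simp only [Set.mem_setOf_eq] at hx ⊢
    linarith
  obtain ⟨c₂, hc₂⟩ := hZbdd0
  have hZbdd : BddAbove Z := ⟨c₂, fun z hz => by
    by_contra hlt; push_neg at hlt
    exact hc₂ (hZmono c₂ z hlt.le hz)⟩
  obtain ⟨z₀, hz₀⟩ := hZne
  have hZne' : Z.Nonempty := ⟨z₀, hz₀⟩
  set c' : ℝ := sSup Z with hc'def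
  have hlt : volume (E ∩ {x | g' x < c'}) = 0 := by
    have hcov : E ∩ {x | g' x < c'} ⊆ ⋃ n : ℕ, E ∩ {x | g' x < c' - 1/(n+1)} := by
      rintro x ⟨hxE, hx⟩
      simp only [Set.mem_setOf_eq] at hx
      obtain ⟨n, hn⟩ := exists_nat_one_div_lt (by linarith : 0 < c' - g' x)
      refine Set.mem_iUnion.2 ⟨n, hxE, ?_⟩
      simp only [Set.mem_setOf_eq]
      push_cast at hn ⊢
      linarith
    refine measure_mono_null hcov (measure_iUnion_null fun n => ?_)
    have hpos : (0:ℝ) < 1/((n:ℝ)+1) := by positivity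
    obtain ⟨z, hzZ, hz⟩ := exists_lt_of_lt_csSup hZne' (by linarith : c' - 1/((n:ℝ)+1) < c')
    refine measure_mono_null ?_ hzZ
    rintro x ⟨hxE, hx⟩
    simp only [Set.mem_setOf_eq] at hx ⊢
    exact ⟨hxE, by simp only [Set.mem_setOf_eq]; linarith⟩
  have hgt : volume (E ∩ {x | c' < g' x}) = 0 := by
    have hcov : E ∩ {x | c' < g' x} ⊆ ⋃ n : ℕ, E ∩ {x | c' + 1/(n+1) < g' x} := by
      rintro x ⟨hxE, hx⟩
      simp only [Set.mem_setOf_eq] at hx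
      obtain ⟨n, hn⟩ := exists_nat_one_div_lt (by linarith : 0 < g' x - c')
      refine Set.mem_iUnion.2 ⟨n, hxE, ?_⟩
      simp only [Set.mem_setOf_eq]
      push_cast at hn ⊢
      linarith
    refine measure_mono_null hcov (measure_iUnion_null fun n => ?_)
    have hpos : (0:ℝ) < 1/((n:ℝ)+1) := by positivity
    have hnotZ : (c' + 1/((n:ℝ)+1)) ∉ Z := by
      intro hmem
      have := le_csSup hZbdd hmem
      rw [← hc'def] at this
      linarith
    exact (dich _).resolve_left hnotZ
  have haec : ∀ A : Set ℝ, A ⊆ E → ∫ x in A, g' x = ∫ x in A, (fun _ => c') x := by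
    intro A hAE
    refine integral_congr_ae (ae_restrict_of_ae_restrict_of_subset hAE ?_)
    have hmeas : MeasurableSet {x | g' x = c'}ᶜ :=
      (hg'meas (measurableSet_singleton c')).compl
    refine (ae_iff).2 ?_
    show volume.restrict E {x | ¬ g' x = c'} = 0
    have hEq : {x | ¬ g' x = c'} = {x | g' x = c'}ᶜ := rfl
    rw [hEq, Measure.restrict_apply hmeas]
    refine measure_mono_null ?_ (measure_union_null hlt hgt)
    rintro x ⟨hx, hxE⟩
    simp only [Set.mem_compl_iff, Set.mem_setOf_eq] at hx
    rcases lt_or_gt_of_ne hx with h | h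
    · exact Or.inl ⟨hxE, h⟩
    · exact Or.inr ⟨hxE, h⟩
  obtain ⟨A₀, hA₀E, hA₀m, hA₀vol⟩ := exists_subset_volume_eq hEm hEb hEγ.le
  have hc0 : c' = 0 := by
    have h := h0 A₀ hA₀m hA₀E hA₀vol
    rw [key _ hA₀E, haec _ hA₀E, setIntegral_const, measureReal_def, hA₀vol] at h
    simp only [smul_eq_mul, ENNReal.toReal_ofReal hγ0.le] at h
    rcases mul_eq_zero.1 h with h' | h'
    · exact absurd h' (by linarith)
    · exact h'
  intro B hBm hBE
  rw [key _ hBE, haec _ hBE, setIntegral_const, hc0]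
  simp

lemma free {n : ℕ} {γ : ℝ} (hγ0 : 0 < γ)
    {f : (Fin (n+1) → ℝ) → ℝ}
    (hf : IntegrableOn f (Set.univ.pi fun _ : Fin (n+1) => Set.Icc (0:ℝ) 1) volume)
    (i : Fin (n+1)) (A : Fin (n+1) → Set ℝ)
    (hAm : ∀ j, MeasurableSet (A j)) (hAb : ∀ j, A j ⊆ Set.Icc (0:ℝ) 1)
    {E : Set ℝ} (hEm : MeasurableSet E) (hEb : E ⊆ Set.Icc (0:ℝ) 1)
    (hEγ : ENNReal.ofReal γ < volume E)
    (h0 : ∀ B, MeasurableSet B → B ⊆ E → volume B = ENNReal.ofReal γ →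
      ∫ x in Set.univ.pi (Function.update A i B), f x = 0) :
    ∀ B, MeasurableSet B → B ⊆ E → ∫ x in Set.univ.pi (Function.update A i B), f x = 0 := by
  classical
  set e := MeasurableEquiv.piFinSuccAbove (fun _ : Fin (n+1) => ℝ) i with hedef
  set T : Set (Fin n → ℝ) := Set.univ.pi (fun j => A (i.succAbove j)) with hTdef
  have hTm : MeasurableSet T := MeasurableSet.univ_pi fun j => hAm _
  set F : ℝ × (Fin n → ℝ) → ℝ := fun p => f (e.symm p) with hFdef
  have hFe : ∀ x, F (e x) = f x := fun x => by simp [hFdef]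
  have hMP : MeasurePreserving e volume (volume.prod volume) := by
    rw [← Measure.volume_eq_prod]
    exact volume_preserving_piFinSuccAbove _ i
  have hemb : MeasurableEmbedding e := e.measurableEmbedding
  -- preimage identity
  have hpre : ∀ B : Set ℝ, e ⁻¹' (B ×ˢ T) = Set.univ.pi (Function.update A i B) := by
    intro B
    ext x
    have hex : e x = (x i, fun j => x (i.succAbove j)) := rfl
    simp only [Set.mem_preimage, hex, Set.mem_prod, hTdef, Set.mem_pi, Set.mem_univ,
      true_implies]
    constructor
    · rintro ⟨h1, h2⟩ j
      rcases eq_or_ne j i with rfl | hj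
      · simpa [Function.update_self] using h1
      · obtain ⟨k, rfl⟩ := Fin.exists_succAbove_eq hj
        simpa [Function.update_of_ne (Fin.succAbove_ne i k)] using h2 k
    · intro h
      refine ⟨by simpa [Function.update_self] using h i, fun k => ?_⟩
      simpa [Function.update_of_ne (Fin.succAbove_ne i k)] using h (i.succAbove k)
  -- integrability of F on products of subsets of the cube
  have hFint : ∀ B : Set ℝ, MeasurableSet B → B ⊆ Set.Icc (0:ℝ) 1 →
      IntegrableOn F (B ×ˢ T) (volume.prod volume) := by
    intro B hBm hBb
    have hsub : Set.univ.pi (Function.update A i B) ⊆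
        Set.univ.pi fun _ : Fin (n+1) => Set.Icc (0:ℝ) 1 := by
      intro x hx j _
      rcases eq_or_ne j i with rfl | hj
      · exact hBb (by simpa [Function.update_self] using hx j (Set.mem_univ j))
      · exact hAb j (by simpa [Function.update_of_ne hj] using hx j (Set.mem_univ j))
    have h1 : IntegrableOn f (Set.univ.pi (Function.update A i B)) volume :=
      hf.mono_set hsub
    have h2 : IntegrableOn (F ∘ e) (e ⁻¹' (B ×ˢ T)) volume := by
      rw [hpre]
      refine h1.congr_fun ?_ ?_
      · intro x _; exact (hFe x).symm ▸ rfl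
      · rw [← hpre]; exact e.measurable (hBm.prod hTm)
    exact ((hMP.restrict_preimage_emb hemb (B ×ˢ T)).integrable_comp_emb hemb (g := F)).1 h2
  -- the slice function
  set g : ℝ → ℝ := fun t => ∫ y in T, F (t, y) with hgdef
  have hkey : ∀ B : Set ℝ, MeasurableSet B → B ⊆ Set.Icc (0:ℝ) 1 →
      ∫ x in Set.univ.pi (Function.update A i B), f x = ∫ t in B, g t := by
    intro B hBm hBb
    rw [← hpre]
    have h1 : ∫ x in e ⁻¹' (B ×ˢ T), f x = ∫ x in e ⁻¹' (B ×ˢ T), F (e x) := by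
      refine setIntegral_congr_fun ?_ fun x _ => (hFe x).symm
      exact e.measurable (hBm.prod hTm)
    rw [h1, hMP.setIntegral_preimage_emb hemb F (B ×ˢ T),
      setIntegral_prod F (hFint B hBm hBb)]
  have hgint : IntegrableOn g (Set.Icc (0:ℝ) 1) volume := by
    have h2 := hFint (Set.Icc (0:ℝ) 1) measurableSet_Icc subset_rfl
    rw [IntegrableOn, ← Measure.prod_restrict] at h2
    exact h2.integral_prod_left
  have h0' : ∀ B, MeasurableSet B → B ⊆ E → volume B = ENNReal.ofReal γ →
      ∫ t in B, g t = 0 := by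
    intro B hBm hBE hBvol
    rw [← hkey B hBm (hBE.trans hEb)]
    exact h0 B hBm hBE hBvol
  intro B hBm hBE
  rw [hkey B hBm (hBE.trans hEb)]
  exact onedim hγ0 hEm hEb hEγ (hgint.mono_set hEb) h0' B hBm hBE

lemma claim1 {n : ℕ} {γ : ℝ} (hγ0 : 0 < γ) (hγ1 : γ < 1)
    {f : (Fin (n+1) → ℝ) → ℝ}
    (hf : IntegrableOn f (Set.univ.pi fun _ : Fin (n+1) => Set.Icc (0:ℝ) 1) volume)
    (H : ∀ A : Fin (n+1) → Set ℝ, (∀ i, MeasurableSet (A i)) →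
      (∀ i, A i ⊆ Set.Icc (0:ℝ) 1) → (∀ i, volume (A i) = ENNReal.ofReal γ) →
      ∫ x in Set.univ.pi A, f x = 0) :
    ∀ (s : Finset (Fin (n+1))) (A : Fin (n+1) → Set ℝ), (∀ i, MeasurableSet (A i)) →
      (∀ i, A i ⊆ Set.Icc (0:ℝ) 1) → (∀ i, i ∉ s → volume (A i) = ENNReal.ofReal γ) →
      ∫ x in Set.univ.pi A, f x = 0 := by
  intro s
  induction s using Finset.induction with
  | empty => exact fun A h1 h2 h3 => H A h1 h2 fun i => h3 i (Finset.notMem_empty i)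
  | @insert i s hi ih =>
    intro A h1 h2 h3
    have hIccγ : ENNReal.ofReal γ < volume (Set.Icc (0:ℝ) 1) := by
      rw [Real.volume_Icc]
      norm_num
      exact hγ1
    have hcon := free hγ0 hf i A h1 h2 measurableSet_Icc subset_rfl hIccγ ?_ (A i) (h1 i) (h2 i)
    · rwa [Function.update_eq_self] at hcon
    intro B hBm hBE hBvol
    refine ih (Function.update A i B) ?_ ?_ ?_
    · intro j; rcases eq_or_ne j i with rfl | hj
      · simpa using hBm
      · simpa [Function.update_of_ne hj] using h1 j
    · intro j; rcases eq_or_ne j i with rfl | hj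
      · simpa using hBE
      · simpa [Function.update_of_ne hj] using h2 j
    · intro j hj
      rcases eq_or_ne j i with rfl | hj'
      · simpa using hBvol
      · rw [Function.update_of_ne hj']
        exact h3 j fun hmem => (Finset.mem_insert.1 hmem).elim hj' hj

lemma claim2 {n : ℕ} {γ : ℝ} (hγ0 : 0 < γ) (hγm : ((n:ℝ)+1) * γ < 1)
    {f : (Fin (n+1) → ℝ) → ℝ}
    (hf : IntegrableOn f (Set.univ.pi fun _ : Fin (n+1) => Set.Icc (0:ℝ) 1) volume)
    (H : ∀ A : Fin (n+1) → Set ℝ, (∀ i, MeasurableSet (A i)) →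
      (∀ i, A i ⊆ Set.Icc (0:ℝ) 1) → (∀ i j, i ≠ j → Disjoint (A i) (A j)) →
      (∀ i, volume (A i) = ENNReal.ofReal γ) → ∫ x in Set.univ.pi A, f x = 0) :
    ∀ (s : Finset (Fin (n+1))) (A : Fin (n+1) → Set ℝ), (∀ i, MeasurableSet (A i)) →
      (∀ i, A i ⊆ Set.Icc (0:ℝ) 1) → (∀ i j, i ≠ j → Disjoint (A i) (A j)) →
      (∀ i, i ∉ s → volume (A i) = ENNReal.ofReal γ) →
      (∀ i, volume (A i) ≤ ENNReal.ofReal γ) →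
      ∫ x in Set.univ.pi A, f x = 0 := by
  intro s
  induction s using Finset.induction with
  | empty => exact fun A h1 h2 hd h3 _ => H A h1 h2 hd fun i => h3 i (Finset.notMem_empty i)
  | @insert i s hi ih =>
    intro A h1 h2 hd h3 h4
    set U : Set ℝ := ⋃ j ∈ Finset.univ.erase i, A j with hUdef
    have hUm : MeasurableSet U := Finset.measurableSet_biUnion _ fun j _ => h1 j
    have hUb : U ⊆ Set.Icc (0:ℝ) 1 := by
      intro x hx
      obtain ⟨j, -, hj⟩ := Set.mem_iUnion₂.1 hx
      exact h2 j hj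
    have hUvol : volume U ≤ (n : ℝ≥0∞) * ENNReal.ofReal γ := by
      refine (measure_biUnion_finset_le _ _).trans ?_
      have hcard : (Finset.univ.erase i).card = n := by
        rw [Finset.card_erase_of_mem (Finset.mem_univ i), Finset.card_univ, Fintype.card_fin]
        omega
      calc ∑ j ∈ Finset.univ.erase i, volume (A j)
          ≤ ∑ _j ∈ Finset.univ.erase i, ENNReal.ofReal γ :=
            Finset.sum_le_sum fun j _ => h4 j
        _ = (n : ℝ≥0∞) * ENNReal.ofReal γ := by
            rw [Finset.sum_const, hcard]; simp [nsmul_eq_mul]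
    set E : Set ℝ := Set.Icc (0:ℝ) 1 \ U with hEdef
    have hEm : MeasurableSet E := measurableSet_Icc.diff hUm
    have hEb : E ⊆ Set.Icc (0:ℝ) 1 := diff_subset
    have hEγ : ENNReal.ofReal γ < volume E := by
      have hdiff : volume E = volume (Set.Icc (0:ℝ) 1) - volume U :=
        measure_diff hUb hUm.nullMeasurableSet
          ((measure_mono hUb).trans_lt (by simp [Real.volume_Icc])).ne
      rw [hdiff, Real.volume_Icc]
      norm_num
      rw [lt_tsub_iff_right]
      calc ENNReal.ofReal γ + volume U ≤ ENNReal.ofReal γ + (n : ℝ≥0∞) * ENNReal.ofReal γ := by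
            gcongr
        _ = ((n : ℝ≥0∞) + 1) * ENNReal.ofReal γ := by ring
        _ = ENNReal.ofReal (((n:ℝ)+1) * γ) := by
            rw [ENNReal.ofReal_mul (by positivity), ENNReal.ofReal_add (by positivity) zero_le_one,
              ENNReal.ofReal_natCast, ENNReal.ofReal_one]
        _ < 1 := ENNReal.ofReal_lt_one.2 hγm
    have hAiE : A i ⊆ E := by
      intro x hx
      refine ⟨h2 i hx, fun hxU => ?_⟩
      obtain ⟨j, hj, hxj⟩ := Set.mem_iUnion₂.1 hxU
      have hji : j ≠ i := Finset.ne_of_mem_erase hj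
      exact Set.disjoint_left.1 (hd i j (Ne.symm hji)) hx hxj
    have hcon := free hγ0 hf i A h1 h2 hEm hEb hEγ ?_ (A i) (h1 i) hAiE
    · rwa [Function.update_eq_self] at hcon
    intro B hBm hBE hBvol
    have hBb : B ⊆ Set.Icc (0:ℝ) 1 := hBE.trans hEb
    have hBdisj : ∀ j, j ≠ i → Disjoint B (A j) := by
      intro j hj
      refine Set.disjoint_left.2 fun x hxB hxA => ?_
      exact (hBE hxB).2 (Set.mem_iUnion₂.2 ⟨j, Finset.mem_erase.2 ⟨hj, Finset.mem_univ j⟩, hxA⟩)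
    refine ih (Function.update A i B) ?_ ?_ ?_ ?_ ?_
    · intro j; rcases eq_or_ne j i with rfl | hj
      · simpa using hBm
      · simpa [Function.update_of_ne hj] using h1 j
    · intro j; rcases eq_or_ne j i with rfl | hj
      · simpa using hBb
      · simpa [Function.update_of_ne hj] using h2 j
    · intro j k hjk
      rcases eq_or_ne j i with rfl | hj
      · rw [Function.update_self, Function.update_of_ne (Ne.symm hjk)]
        exact hBdisj k (Ne.symm hjk)
      · rcases eq_or_ne k i with rfl | hk
        · rw [Function.update_self, Function.update_of_ne hj]
          exact (hBdisj j hj).symm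
        · rw [Function.update_of_ne hj, Function.update_of_ne hk]
          exact hd j k hjk
    · intro j hj
      rcases eq_or_ne j i with rfl | hj'
      · simpa using hBvol
      · rw [Function.update_of_ne hj']
        exact h3 j fun hmem => (Finset.mem_insert.1 hmem).elim hj' hj
    · intro j
      rcases eq_or_ne j i with rfl | hj'
      · simpa using hBvol.le
      · rw [Function.update_of_ne hj']
        exact h4 j

lemma part1 {n : ℕ} {γ : ℝ} (hγ0 : 0 < γ) (hγ1 : γ < 1)
    {f : (Fin (n+1) → ℝ) → ℝ}
    (hf : IntegrableOn f (Set.univ.pi fun _ : Fin (n+1) => Set.Icc (0:ℝ) 1) volume)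
    (H : ∀ A : Fin (n+1) → Set ℝ, (∀ i, MeasurableSet (A i)) →
      (∀ i, A i ⊆ Set.Icc (0:ℝ) 1) → (∀ i, volume (A i) = ENNReal.ofReal γ) →
      ∫ x in Set.univ.pi A, f x = 0) :
    ∀ᵐ x ∂((volume : Measure (Fin (n+1) → ℝ)).restrict
        (Set.univ.pi fun _ : Fin (n+1) => Set.Icc (0:ℝ) 1)), f x = 0 := by
  set cube : Set (Fin (n+1) → ℝ) := Set.univ.pi fun _ : Fin (n+1) => Set.Icc (0:ℝ) 1
    with hcdef
  have hcubem : MeasurableSet cube := MeasurableSet.univ_pi fun _ => measurableSet_Icc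
  set μ : Measure (Fin (n+1) → ℝ) := volume.restrict cube with hμdef
  have hcubefin : volume cube < ⊤ := by
    rw [hcdef, volume_pi_pi]
    simp [Real.volume_Icc]
  have hfμ : Integrable f μ := hf
  have hzero : ∀ A : Fin (n+1) → Set ℝ, (∀ i, MeasurableSet (A i)) →
      (∀ i, A i ⊆ Set.Icc (0:ℝ) 1) → ∫ x in Set.univ.pi A, f x = 0 :=
    fun A h1 h2 => claim1 hγ0 hγ1 hf H Finset.univ A h1 h2
      (fun i hi => absurd (Finset.mem_univ i) hi)
  have hrect : ∀ B : Fin (n+1) → Set ℝ, (∀ i, MeasurableSet (B i)) →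
      ∫ x in Set.univ.pi B, f x ∂μ = 0 := by
    intro B hB
    rw [hμdef, Measure.restrict_restrict (MeasurableSet.univ_pi hB)]
    have heq : Set.univ.pi B ∩ cube = Set.univ.pi (fun i => B i ∩ Set.Icc (0:ℝ) 1) := by
      ext x
      simp only [hcdef, Set.mem_inter_iff, Set.mem_pi, Set.mem_univ, true_implies,
        Set.mem_inter_iff]
      exact ⟨fun ⟨ha, hb⟩ i => ⟨ha i, hb i⟩, fun h => ⟨fun i => (h i).1, fun i => (h i).2⟩⟩
    rw [heq]
    exact hzero _ (fun i => (hB i).inter measurableSet_Icc) (fun i => inter_subset_right)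
  have htotal : ∫ x, f x ∂μ = 0 := by
    rw [← setIntegral_univ (μ := μ)]
    have huniv : (Set.univ : Set (Fin (n+1) → ℝ)) = Set.univ.pi fun _ => (Set.univ : Set ℝ) := by
      simp
    rw [huniv]
    exact hrect _ fun i => MeasurableSet.univ
  have hall : ∀ t : Set (Fin (n+1) → ℝ), MeasurableSet t → ∫ x in t, f x ∂μ = 0 := by
    have h_eq : (inferInstance : MeasurableSpace (Fin (n+1) → ℝ)) =
        MeasurableSpace.generateFrom
          (Set.pi Set.univ '' Set.pi Set.univ fun _ : Fin (n+1) => {s : Set ℝ | MeasurableSet s}) :=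
      generateFrom_pi.symm
    intro t ht
    refine MeasurableSpace.induction_on_inter (C := fun u _ => ∫ x in u, f x ∂μ = 0) h_eq isPiSystem_pi ?_ ?_ ?_ ?_ t ht
    · simp
    · rintro u ⟨B, hB, rfl⟩
      exact hrect B (fun i => hB i (Set.mem_univ i))
    · intro u hu h
      have hsum := integral_add_compl hu hfμ
      rw [h] at hsum
      rw [← htotal, ← hsum]
      ring
    · intro g hdisj hmeas hz
      rw [integral_iUnion hmeas hdisj hfμ.integrableOn]
      simp [hz]
  have hmeasf : AEFinStronglyMeasurable f μ :=
    aefinStronglyMeasurable_of_aemeasurable μ hfμ.aemeasurable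
  have := hmeasf.ae_eq_zero_of_forall_setIntegral_eq_zero
    (fun s hs _ => hfμ.integrableOn) (fun s hs _ => hall s hs)
  filter_upwards [this] with x hx using hx

lemma part2 {n : ℕ} {γ : ℝ} (hγ0 : 0 < γ) (hγm : ((n:ℝ)+1) * γ < 1)
    {f : (Fin (n+1) → ℝ) → ℝ}
    (hf : IntegrableOn f (Set.univ.pi fun _ : Fin (n+1) => Set.Icc (0:ℝ) 1) volume)
    (H : ∀ A : Fin (n+1) → Set ℝ, (∀ i, MeasurableSet (A i)) →
      (∀ i, A i ⊆ Set.Icc (0:ℝ) 1) → (∀ i j, i ≠ j → Disjoint (A i) (A j)) →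
      (∀ i, volume (A i) = ENNReal.ofReal γ) → ∫ x in Set.univ.pi A, f x = 0) :
    ∀ᵐ x ∂((volume : Measure (Fin (n+1) → ℝ)).restrict
        (Set.univ.pi fun _ : Fin (n+1) => Set.Icc (0:ℝ) 1)), f x = 0 := by
  classical
  set cube : Set (Fin (n+1) → ℝ) := Set.univ.pi fun _ : Fin (n+1) => Set.Icc (0:ℝ) 1
    with hcdef
  have hcubem : MeasurableSet cube := MeasurableSet.univ_pi fun _ => measurableSet_Icc
  set μ : Measure (Fin (n+1) → ℝ) := volume.restrict cube with hμdef
  have hfμ : Integrable f μ := hf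
  have hzero : ∀ A : Fin (n+1) → Set ℝ, (∀ i, MeasurableSet (A i)) →
      (∀ i, A i ⊆ Set.Icc (0:ℝ) 1) → (∀ i j, i ≠ j → Disjoint (A i) (A j)) →
      (∀ i, volume (A i) ≤ ENNReal.ofReal γ) → ∫ x in Set.univ.pi A, f x = 0 :=
    fun A h1 h2 hd h4 => claim2 hγ0 hγm hf H Finset.univ A h1 h2 hd
      (fun i hi => absurd (Finset.mem_univ i) hi) h4
  -- Dynkin argument relative to a fixed small rectangle with disjoint sides
  have hRECT : ∀ I : Fin (n+1) → Set ℝ, (∀ i, MeasurableSet (I i)) →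
      (∀ i, I i ⊆ Set.Icc (0:ℝ) 1) → (∀ i j, i ≠ j → Disjoint (I i) (I j)) →
      (∀ i, volume (I i) ≤ ENNReal.ofReal γ) →
      ∀ t : Set (Fin (n+1) → ℝ), MeasurableSet t →
        ∫ x in t ∩ Set.univ.pi I, f x ∂μ = 0 := by
    intro I hIm hIb hId hIγ
    set R : Set (Fin (n+1) → ℝ) := Set.univ.pi I with hRdef
    have hRm : MeasurableSet R := MeasurableSet.univ_pi hIm
    -- basic rectangles
    have hbasic : ∀ B : Fin (n+1) → Set ℝ, (∀ i, MeasurableSet (B i)) →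
        ∫ x in (Set.univ.pi B) ∩ R, f x ∂μ = 0 := by
      intro B hB
      have heq : Set.univ.pi B ∩ R = Set.univ.pi (fun i => B i ∩ I i) := by
        ext x
        simp only [hRdef, Set.mem_inter_iff, Set.mem_pi, Set.mem_univ, true_implies,
          Set.mem_inter_iff]
        exact ⟨fun ⟨ha, hb⟩ i => ⟨ha i, hb i⟩, fun h => ⟨fun i => (h i).1, fun i => (h i).2⟩⟩
      have hsub : Set.univ.pi (fun i => B i ∩ I i) ⊆ cube := by
        intro x hx j _
        exact hIb j (hx j (Set.mem_univ j)).2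
      rw [heq, hμdef, Measure.restrict_restrict (MeasurableSet.univ_pi fun i =>
        (hB i).inter (hIm i)), Set.inter_eq_left.2 hsub]
      refine hzero _ (fun i => (hB i).inter (hIm i)) (fun i => (inter_subset_right).trans (hIb i))
        (fun i j hij => ((hId i j hij).mono inter_subset_right inter_subset_right)) ?_
      exact fun i => (measure_mono inter_subset_right).trans (hIγ i)
    have hRzero : ∫ x in R, f x ∂μ = 0 := by
      have := hbasic (fun _ => Set.univ) (fun _ => MeasurableSet.univ)
      simpa using this
    have h_eq : (inferInstance : MeasurableSpace (Fin (n+1) → ℝ)) =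
        MeasurableSpace.generateFrom
          (Set.pi Set.univ '' Set.pi Set.univ fun _ : Fin (n+1) => {s : Set ℝ | MeasurableSet s}) :=
      generateFrom_pi.symm
    intro t ht
    refine MeasurableSpace.induction_on_inter
      (C := fun u _ => ∫ x in u ∩ R, f x ∂μ = 0) h_eq isPiSystem_pi ?_ ?_ ?_ ?_ t ht
    · simp
    · rintro u ⟨B, hB, rfl⟩
      exact hbasic B (fun i => hB i (Set.mem_univ i))
    · intro u hu h
      have hdisj : Disjoint (u ∩ R) (uᶜ ∩ R) :=
        (disjoint_compl_right : Disjoint u uᶜ).mono inter_subset_left inter_subset_left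
      have hsplit : ∫ x in u ∩ R, f x ∂μ + ∫ x in uᶜ ∩ R, f x ∂μ = ∫ x in R, f x ∂μ := by
        rw [← setIntegral_union hdisj (hu.compl.inter hRm) hfμ.integrableOn hfμ.integrableOn]
        rw [← Set.union_inter_distrib_right, Set.union_compl_self, Set.univ_inter]
      rw [h, zero_add] at hsplit
      rw [hsplit, hRzero]
    · intro g hdisj hmeas hz
      rw [Set.iUnion_inter]
      rw [integral_iUnion (fun k => (hmeas k).inter hRm)
        (hdisj.mono fun a b hab => hab.mono inter_subset_left inter_subset_left)
        hfμ.integrableOn]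
      simp [hz]
  -- dyadic small rectangles with pairwise disjoint sides
  set Iv : ℕ → ℕ → Set ℝ := fun N a => Set.Ico ((a : ℝ)/2^N) (((a : ℝ)+1)/2^N) with hIvdef
  set Good : ℕ × (Fin (n+1) → ℕ) → Prop := fun p =>
    Function.Injective p.2 ∧ (∀ j, p.2 j + 1 ≤ 2^p.1) ∧ (1:ℝ)/2^p.1 ≤ γ with hGdef
  set D : ℕ × (Fin (n+1) → ℕ) → Set (Fin (n+1) → ℝ) := fun p =>
    if Good p then Set.univ.pi (fun j => Iv p.1 (p.2 j)) else ∅ with hDdef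
  have hDm : ∀ p, MeasurableSet (D p) := by
    intro p
    simp only [hDdef]
    split
    · exact MeasurableSet.univ_pi fun j => measurableSet_Ico
    · exact MeasurableSet.empty
  have hDzero : ∀ p, ∀ t : Set (Fin (n+1) → ℝ), MeasurableSet t →
      ∫ x in t ∩ D p, f x ∂μ = 0 := by
    intro p t ht
    by_cases hp : Good p
    · obtain ⟨hinj, hlt, hγN⟩ := hp
      have hDp : D p = Set.univ.pi (fun j => Iv p.1 (p.2 j)) := by
        rw [hDdef]; exact if_pos ⟨hinj, hlt, hγN⟩
      rw [hDp]
      have h2N : (0:ℝ) < 2^p.1 := by positivity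
      refine hRECT _ (fun j => measurableSet_Ico) ?_ ?_ ?_ t ht
      · intro j x hx
        obtain ⟨hx1, hx2⟩ := hx
        constructor
        · exact le_trans (by positivity) hx1
        · refine le_trans hx2.le ?_
          rw [div_le_one h2N]
          have := hlt j
          exact_mod_cast (by exact_mod_cast this : ((p.2 j : ℝ) + 1) ≤ (2:ℝ)^p.1)
      · intro j k hjk
        have hab : p.2 j ≠ p.2 k := fun h => hjk (hinj h)
        rw [Set.Ico_disjoint_Ico]
        rcases Nat.lt_or_ge (p.2 j) (p.2 k) with h | h
        · have : (p.2 j : ℝ) + 1 ≤ (p.2 k : ℝ) := by exact_mod_cast h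
          refine le_trans (min_le_left _ _) ?_
          refine le_trans ?_ (le_max_right _ _)
          gcongr
        · have hlt' : p.2 k < p.2 j := lt_of_le_of_ne h (Ne.symm hab)
          have : (p.2 k : ℝ) + 1 ≤ (p.2 j : ℝ) := by exact_mod_cast hlt'
          refine le_trans (min_le_right _ _) ?_
          refine le_trans ?_ (le_max_left _ _)
          gcongr
      · intro j
        simp only [Real.volume_Ico]
        refine le_trans (le_of_eq ?_) (ENNReal.ofReal_le_ofReal hγN)
        congr 1
        field_simp
        ring
    · have hDp : D p = ∅ := by rw [hDdef]; exact if_neg hp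
      rw [hDp]
      simp
  -- the union of the dyadic rectangles covers the open cube minus diagonals
  set W : Set (Fin (n+1) → ℝ) := ⋃ p, D p with hWdef
  have hWnull : volume (cube \ W) = 0 := by
    have hZ1 : ∀ j : Fin (n+1), volume {x : Fin (n+1) → ℝ | x j = 1} = 0 := by
      intro j
      have heq : {x : Fin (n+1) → ℝ | x j = 1} =
          Set.univ.pi (Function.update (fun _ : Fin (n+1) => (Set.univ : Set ℝ)) j {1}) := by
        ext x
        simp only [Set.mem_setOf_eq, Set.mem_pi, Set.mem_univ, true_implies]
        constructor
        · intro h i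
          rcases eq_or_ne i j with rfl | hij
          · simpa using h
          · simp [Function.update_of_ne hij]
        · intro h
          have := h j
          simpa using this
      rw [heq, volume_pi_pi]
      refine Finset.prod_eq_zero (Finset.mem_univ j) ?_
      simp
    have hZ2 : ∀ j l : Fin (n+1), j ≠ l → volume {x : Fin (n+1) → ℝ | x j = x l} = 0 := by
      intro j l h
      have hs : {x : Fin (n+1) → ℝ | x j = x l} =
          (LinearMap.ker ((LinearMap.proj j : (Fin (n+1) → ℝ) →ₗ[ℝ] ℝ) - LinearMap.proj l) :
            Set (Fin (n+1) → ℝ)) := by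
        ext x
        simp [LinearMap.mem_ker, sub_eq_zero]
      rw [hs]
      apply Measure.addHaar_submodule
      intro htop
      have h1 : (Pi.single j (1:ℝ) : Fin (n+1) → ℝ) ∈ LinearMap.ker
          ((LinearMap.proj j : (Fin (n+1) → ℝ) →ₗ[ℝ] ℝ) - LinearMap.proj l) := by
        rw [htop]; trivial
      simp [LinearMap.mem_ker, Pi.single_eq_of_ne (Ne.symm h)] at h1
    set Z : Set (Fin (n+1) → ℝ) := (⋃ j, {x : Fin (n+1) → ℝ | x j = 1}) ∪
      ⋃ (q : Fin (n+1) × Fin (n+1)), ⋃ (_ : q.1 ≠ q.2), {x : Fin (n+1) → ℝ | x q.1 = x q.2}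
      with hZdef
    have hZnull : volume Z = 0 := by
      refine measure_union_null (measure_iUnion_null hZ1) (measure_iUnion_null fun q => ?_)
      exact measure_iUnion_null fun hq => hZ2 q.1 q.2 hq
    refine measure_mono_null ?_ hZnull
    rintro x ⟨hxc, hxW⟩
    by_contra hxZ
    apply hxW
    have hx01 : ∀ j, 0 ≤ x j ∧ x j < 1 := by
      intro j
      have h1 := hxc j (Set.mem_univ j)
      exact ⟨h1.1, lt_of_le_of_ne h1.2 fun h => hxZ (Or.inl (Set.mem_iUnion.2 ⟨j, h⟩))⟩
    have hxd : ∀ j l, j ≠ l → x j ≠ x l := by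
      intro j l hjl h
      exact hxZ (Or.inr (Set.mem_iUnion.2 ⟨(j,l), Set.mem_iUnion.2 ⟨hjl, h⟩⟩))
    obtain ⟨ε, hε0, hεγ, hεd⟩ :
        ∃ ε > 0, ε ≤ γ ∧ ∀ q ∈ (Finset.univ.offDiag : Finset (Fin (n+1) × Fin (n+1))),
          ε ≤ |x q.1 - x q.2| := by
      rcases (Finset.univ.offDiag (α := Fin (n+1))).eq_empty_or_nonempty with h | h
      · exact ⟨γ, hγ0, le_rfl, by simp [h]⟩
      · refine ⟨min γ ((Finset.univ.offDiag).inf' h fun q => |x q.1 - x q.2|), ?_,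
          min_le_left _ _, fun q hq => (min_le_right _ _).trans (Finset.inf'_le _ hq)⟩
        refine lt_min hγ0 ?_
        rw [Finset.lt_inf'_iff]
        intro q hq
        have hne : q.1 ≠ q.2 := (Finset.mem_offDiag.1 hq).2.2
        exact abs_pos.2 (sub_ne_zero.2 (hxd q.1 q.2 hne))
    obtain ⟨N, hN⟩ := exists_pow_lt_of_lt_one hε0 (by norm_num : (1:ℝ)/2 < 1)
    have hNε : (1:ℝ)/2^N < ε := by
      have h' : ((1:ℝ)/2)^N = 1/2^N := by rw [div_pow, one_pow]
      rw [← h']; exact hN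
    have h2N : (0:ℝ) < 2^N := by positivity
    set k : Fin (n+1) → ℕ := fun j => (⌊x j * 2^N⌋).toNat with hkdef
    have hkfl : ∀ j, (k j : ℝ) = (⌊x j * 2^N⌋ : ℤ) := by
      intro j
      have hnn : (0:ℤ) ≤ ⌊x j * 2^N⌋ :=
        Int.floor_nonneg.2 (by nlinarith [(hx01 j).1])
      have h1 := Int.toNat_of_nonneg hnn
      show ((⌊x j * 2^N⌋).toNat : ℝ) = ((⌊x j * 2^N⌋ : ℤ) : ℝ)
      exact_mod_cast congrArg (Int.cast : ℤ → ℝ) h1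
    have hmem : ∀ j, x j ∈ Set.Ico ((k j : ℝ)/2^N) (((k j : ℝ)+1)/2^N) := by
      intro j
      constructor
      · rw [div_le_iff₀ h2N, hkfl j]
        exact Int.floor_le _
      · rw [lt_div_iff₀ h2N, hkfl j]
        exact Int.lt_floor_add_one _
    have hkb : ∀ j, k j + 1 ≤ 2^N := by
      intro j
      have hflt : (k j : ℝ) < (2^N : ℝ) := by
        rw [hkfl j]
        calc ((⌊x j * 2^N⌋ : ℤ) : ℝ) ≤ x j * 2^N := Int.floor_le _
          _ < 1 * 2^N := by nlinarith [(hx01 j).2]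
          _ = 2^N := one_mul _
      have : k j < 2^N := by exact_mod_cast hflt
      omega
    have hinj : Function.Injective k := by
      intro j l hjl
      by_contra hne
      have hq : (j, l) ∈ (Finset.univ.offDiag : Finset (Fin (n+1) × Fin (n+1))) :=
        Finset.mem_offDiag.2 ⟨Finset.mem_univ _, Finset.mem_univ _, hne⟩
      have hd := hεd (j, l) hq
      have hj1 := hmem j
      have hl1 := hmem l
      rw [hjl] at hj1
      have habs : |x j - x l| < 1/2^N := by
        rw [abs_sub_lt_iff]
        obtain ⟨ha1, ha2⟩ := hj1
        obtain ⟨hb1, hb2⟩ := hl1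
        constructor
        · have : ((k l : ℝ)+1)/2^N - (k l : ℝ)/2^N = 1/2^N := by field_simp; ring
          linarith
        · have : ((k l : ℝ)+1)/2^N - (k l : ℝ)/2^N = 1/2^N := by field_simp; ring
          linarith
      simp only [Set.mem_setOf_eq] at hd
      linarith
    have hGood : Good (N, k) := ⟨hinj, hkb, hNε.le.trans hεγ⟩
    refine Set.mem_iUnion.2 ⟨(N, k), ?_⟩
    have hDeq : D (N, k) = Set.univ.pi (fun j => Iv N (k j)) := by
      simp only [hDdef]
      exact if_pos hGood
    rw [hDeq]
    intro j _
    exact hmem j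
  -- conclude: every measurable set has zero integral
  have hall : ∀ t : Set (Fin (n+1) → ℝ), MeasurableSet t → ∫ x in t, f x ∂μ = 0 := by
    intro t ht
    obtain ⟨u, hu⟩ := exists_surjective_nat (ℕ × (Fin (n+1) → ℕ))
    set S : ℕ → Set (Fin (n+1) → ℝ) := fun k => D (u k) with hSdef
    have hSm : ∀ k, MeasurableSet (S k) := fun k => hDm (u k)
    have hWS : W = ⋃ k, disjointed S k := by
      rw [iUnion_disjointed, hWdef]
      exact (hu.iUnion_comp D).symm
    have hWm : MeasurableSet W := by
      rw [hWS]
      exact MeasurableSet.iUnion fun k => MeasurableSet.disjointed hSm k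
    have hpiece : ∀ k, ∫ x in t ∩ disjointed S k, f x ∂μ = 0 := by
      intro k
      have hsub : t ∩ disjointed S k ⊆ D (u k) :=
        (inter_subset_right).trans (disjointed_subset S k)
      have := hDzero (u k) (t ∩ disjointed S k) (ht.inter (MeasurableSet.disjointed hSm k))
      rwa [Set.inter_eq_left.2 hsub] at this
    have hTW : ∫ x in t ∩ W, f x ∂μ = 0 := by
      rw [hWS, Set.inter_iUnion]
      rw [integral_iUnion (fun k => ht.inter (MeasurableSet.disjointed hSm k))
        ((disjoint_disjointed S).mono fun a b hab =>
          hab.mono inter_subset_right inter_subset_right)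
        hfμ.integrableOn]
      simp [hpiece]
    have hdiffnull : μ (t \ W) = 0 := by
      rw [hμdef, Measure.restrict_apply (ht.diff hWm)]
      refine measure_mono_null ?_ hWnull
      intro x ⟨⟨hxt, hxW⟩, hxc⟩
      exact ⟨hxc, hxW⟩
    have hTd : ∫ x in t \ W, f x ∂μ = 0 := by
      rw [show μ.restrict (t \ W) = 0 from Measure.restrict_eq_zero.2 hdiffnull,
        integral_zero_measure]
    rw [← integral_inter_add_diff hWm hfμ.integrableOn, hTW, hTd, add_zero]
  have hmeasf : AEFinStronglyMeasurable f μ :=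
    aefinStronglyMeasurable_of_aemeasurable μ hfμ.aemeasurable
  have := hmeasf.ae_eq_zero_of_forall_setIntegral_eq_zero
    (fun s hs _ => hfμ.integrableOn) (fun s hs _ => hall s hs)
  filter_upwards [this] with x hx using hx


open MeasureTheory

/-- **Lemma.** Let `γ ∈ (0,1)` and let `f : [0,1]^m → ℝ` be integrable. If
`∫_{A₁ × ⋯ × A_m} f = 0` for all `m`-tuples of measurable subsets of `[0,1]` with
`λ(A₁) = ⋯ = λ(A_m) = γ`, then `f = 0` a.e. on `[0,1]^m`. Moreover, if `γ < 1/m`,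
the same conclusion holds assuming this only for pairwise disjoint such tuples. -/
theorem stmt10 (m : ℕ) (hm : 1 ≤ m) (γ : ℝ) (hγ0 : 0 < γ) (hγ1 : γ < 1)
    (f : (Fin m → ℝ) → ℝ)
    (hf : IntegrableOn f (Set.univ.pi fun _ : Fin m => Set.Icc (0 : ℝ) 1) volume) :
    ((∀ A : Fin m → Set ℝ, (∀ i, MeasurableSet (A i)) →
        (∀ i, A i ⊆ Set.Icc (0 : ℝ) 1) →
        (∀ i, volume (A i) = ENNReal.ofReal γ) →
        ∫ x in Set.univ.pi A, f x = 0) →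
      ∀ᵐ x ∂((volume : Measure (Fin m → ℝ)).restrict
          (Set.univ.pi fun _ : Fin m => Set.Icc (0 : ℝ) 1)), f x = 0)
    ∧ (γ < 1 / (m : ℝ) →
      (∀ A : Fin m → Set ℝ, (∀ i, MeasurableSet (A i)) →
        (∀ i, A i ⊆ Set.Icc (0 : ℝ) 1) →
        (∀ i j, i ≠ j → Disjoint (A i) (A j)) →
        (∀ i, volume (A i) = ENNReal.ofReal γ) →
        ∫ x in Set.univ.pi A, f x = 0) →
      ∀ᵐ x ∂((volume : Measure (Fin m → ℝ)).restrict
          (Set.univ.pi fun _ : Fin m => Set.Icc (0 : ℝ) 1)), f x = 0) := by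
  obtain ⟨n, rfl⟩ : ∃ n, m = n + 1 := ⟨m - 1, by omega⟩
  constructor
  · intro H
    exact part1 hγ0 hγ1 hf H
  · intro hγm H
    refine part2 hγ0 ?_ hf H
    have h1 : ((n + 1 : ℕ) : ℝ) = (n : ℝ) + 1 := by push_cast; ring
    rw [h1] at hγm
    rw [lt_div_iff₀ (by positivity : (0:ℝ) < (n:ℝ)+1)] at hγm
    linarith
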